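/- Let k ≥ 1 be an integer, n = 2k+1 and a = 2/n. For every z > 0 and w ∈ [-1,1], with t = arccos w, one has K_{2/(2k+1)}^2(z,w) = (1/(2k+1)) cos(n z^{1/n} cos(t/n)) + (2/(2k+1)) ∑_{ℓ=1}^{k} cos(n z^{1/n} cos(t/n) cos(2πℓ/(2k+1))) cos(n z^{1/n} sin(t/n) sin(2πℓ/(2k+1))) − (i/(2k+1)) sin(n z^{1/n} cos(t/n)) − (2i/(2k+1)) ∑_{ℓ=1}^{k} sin(n z^{1/n} cos(t/n) cos(2πℓ/(2k+1))) cos(n z^{1/n} sin(t/n) sin(2πℓ/(2k+1))). -/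

import Mathlib

open scoped Real

/-- Bessel function of the first kind `J_ν(z)`, defined by its series. -/
noncomputable def besselJ (ν z : ℝ) : ℝ :=
  ∑' j : ℕ, ((-1 : ℝ) ^ j / (j.factorial * Real.Gamma ((j : ℝ) + ν + 1))) *
    (z / 2) ^ (2 * (j : ℝ) + ν)


/-- The kernel `K_a^2(z,w)` of the radially deformed Fourier transform in dimension 2. -/
noncomputable def deformedKernel2 (a z w : ℝ) : ℂ :=
  ((besselJ 0 ((2 / a) * z ^ (a / 2)) : ℝ) : ℂ) +
    2 * ∑' k : ℕ, Complex.exp (-(Real.pi * ((k : ℝ) + 1) / a) * Complex.I) *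
      ((besselJ (2 * ((k : ℝ) + 1) / a) ((2 / a) * z ^ (a / 2)) : ℝ) : ℂ) *
      ((Real.cos (((k : ℝ) + 1) * Real.arccos w) : ℝ) : ℂ)

set_option maxHeartbeats 1000000
open scoped Real

noncomputable def cJ (m : ℤ) (x : ℝ) : ℂ :=
  ∑' j : ℕ, ((-1 : ℂ) ^ (j + (-m).toNat) * ((x : ℂ)/2) ^ (2*j + m.natAbs) /
    ((j.factorial : ℂ) * ((j + m.natAbs).factorial : ℂ)))

def pairEquiv : ℤ × ℕ ≃ ℕ × ℕ where
  toFun p := (p.2 + p.1.toNat, p.2 + (-p.1).toNat)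
  invFun q := ((q.1 : ℤ) - (q.2 : ℤ), min q.1 q.2)
  left_inv := by rintro ⟨m, j⟩; simp only [Prod.mk.injEq]; constructor <;> omega
  right_inv := by rintro ⟨p, q⟩; simp only [Prod.mk.injEq]; constructor <;> omega

lemma hasSum_pairs (x : ℝ) (u : ℂ) (hu : ‖u‖ = 1) :
    HasSum (fun p : ℤ × ℕ =>
      ((-1 : ℂ) ^ (p.2 + (-p.1).toNat) * ((x : ℂ)/2) ^ (2*p.2 + p.1.natAbs) /
        ((p.2.factorial : ℂ) * ((p.2 + p.1.natAbs).factorial : ℂ))) * u ^ p.1)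
      (Complex.exp (((x : ℂ)/2) * (u - u⁻¹))) := by
  have hu0 : u ≠ 0 := by intro h; rw [h] at hu; simp at hu
  set A : ℂ := (x : ℂ)/2 * u with hA
  set B : ℂ := -((x : ℂ)/2) * u⁻¹ with hB
  have hnormA : ∀ p : ℕ, ‖A ^ p / (p.factorial : ℂ)‖ = ‖A‖ ^ p / p.factorial := by
    intro p; rw [norm_div, norm_pow]; simp
  have hsumA : Summable fun p : ℕ => ‖A ^ p / (p.factorial : ℂ)‖ := by
    simpa only [hnormA] using Real.summable_pow_div_factorial ‖A‖
  have hnormB : ∀ p : ℕ, ‖B ^ p / (p.factorial : ℂ)‖ = ‖B‖ ^ p / p.factorial := by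
    intro p; rw [norm_div, norm_pow]; simp
  have hsumB : Summable fun p : ℕ => ‖B ^ p / (p.factorial : ℂ)‖ := by
    simpa only [hnormB] using Real.summable_pow_div_factorial ‖B‖
  have hS : Summable fun q : ℕ × ℕ =>
      (A ^ q.1 / (q.1.factorial : ℂ)) * (B ^ q.2 / (q.2.factorial : ℂ)) :=
    summable_mul_of_summable_norm (f := fun p : ℕ => A ^ p / (p.factorial : ℂ))
      (g := fun p : ℕ => B ^ p / (p.factorial : ℂ)) hsumA hsumB
  have hexp : ∀ z : ℂ, Complex.exp z = ∑' p : ℕ, z ^ p / (p.factorial : ℂ) := by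
    intro z
    rw [Complex.exp_eq_exp_ℂ, NormedSpace.exp_eq_tsum_div]
  have htsum : (∑' q : ℕ × ℕ, (A ^ q.1 / (q.1.factorial : ℂ)) * (B ^ q.2 / (q.2.factorial : ℂ)))
      = Complex.exp (((x : ℂ)/2) * (u - u⁻¹)) := by
    rw [← tsum_mul_tsum_of_summable_norm (f := fun p : ℕ => A ^ p / (p.factorial : ℂ))
      (g := fun p : ℕ => B ^ p / (p.factorial : ℂ)) hsumA hsumB, ← hexp, ← hexp, ← Complex.exp_add]
    congr 1
    rw [hA, hB]; ring
  have hkey : HasSum (fun q : ℕ × ℕ => (A ^ q.1 / (q.1.factorial : ℂ)) * (B ^ q.2 / (q.2.factorial : ℂ)))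
      (Complex.exp (((x : ℂ)/2) * (u - u⁻¹))) := htsum ▸ hS.hasSum
  have := (pairEquiv.hasSum_iff).2 hkey
  refine HasSum.congr_fun this ?_
  rintro ⟨m, j⟩
  symm
  show (A ^ (j + m.toNat) / (((j + m.toNat).factorial : ℂ))) *
      (B ^ (j + (-m).toNat) / (((j + (-m).toNat).factorial : ℂ))) = _
  have hBpow : ∀ q : ℕ, B ^ q = (-1 : ℂ) ^ q * ((x : ℂ)/2) ^ q * (u⁻¹) ^ q := by
    intro q; rw [hB]; rw [show -((x:ℂ)/2) * u⁻¹ = (-1) * ((x:ℂ)/2) * u⁻¹ by ring]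
    rw [mul_pow, mul_pow]
  have hApow : ∀ p : ℕ, A ^ p = ((x : ℂ)/2) ^ p * u ^ p := fun p => mul_pow _ _ _
  rw [hApow, hBpow]
  have hupow : u ^ (j + m.toNat) * (u⁻¹) ^ (j + (-m).toNat) = u ^ m := by
    rw [inv_pow, ← zpow_natCast u (j + m.toNat), ← zpow_natCast u (j + (-m).toNat),
      ← div_eq_mul_inv, ← zpow_sub₀ hu0]
    congr 1
    omega
  have hxpow : ((x : ℂ)/2) ^ (j + m.toNat) * ((x : ℂ)/2) ^ (j + (-m).toNat)
      = ((x : ℂ)/2) ^ (2*j + m.natAbs) := by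
    rw [← pow_add]; congr 1; omega
  have hfact : ((j + m.toNat).factorial : ℂ) * ((j + (-m).toNat).factorial : ℂ)
      = (j.factorial : ℂ) * ((j + m.natAbs).factorial : ℂ) := by
    rcases le_or_gt 0 m with h | h
    · have h1 : (-m).toNat = 0 := by omega
      have h2 : m.toNat = m.natAbs := by omega
      rw [h1, h2, add_zero, mul_comm]
    · have h1 : m.toNat = 0 := by omega
      have h2 : (-m).toNat = m.natAbs := by omega
      rw [h1, h2, add_zero]
  have f1 : ((j + m.toNat).factorial : ℂ) ≠ 0 := Nat.cast_ne_zero.2 (Nat.factorial_ne_zero _)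
  have f2 : ((j + (-m).toNat).factorial : ℂ) ≠ 0 := Nat.cast_ne_zero.2 (Nat.factorial_ne_zero _)
  rw [← hfact, ← hxpow, ← hupow]
  ring

lemma hasSum_cJ (x : ℝ) (u : ℂ) (hu : ‖u‖ = 1) :
    HasSum (fun m : ℤ => cJ m x * u ^ m) (Complex.exp (((x : ℂ)/2) * (u - u⁻¹))) := by
  refine (hasSum_pairs x u hu).prod_fiberwise (fun m => ?_)
  have hs := ((hasSum_pairs x u hu).summable.prod_factor m)
  have hval : (∑' j : ℕ, ((-1 : ℂ) ^ (j + (-m).toNat) * ((x : ℂ)/2) ^ (2*j + m.natAbs) /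
      ((j.factorial : ℂ) * ((j + m.natAbs).factorial : ℂ))) * u ^ m) = cJ m x * u ^ m := by
    rw [tsum_mul_right]; rfl
  exact hval ▸ hs.hasSum

lemma summable_cJ (x : ℝ) (u : ℂ) (hu : ‖u‖ = 1) :
    Summable (fun m : ℤ => cJ m x * u ^ m) := (hasSum_cJ x u hu).summable

lemma geom_sum_root (n : ℕ) (hn : 0 < n) (m : ℤ) :
    ∑ j ∈ Finset.range n, (Complex.exp (2 * Real.pi * Complex.I / n) ^ m) ^ j
      = if (n : ℤ) ∣ m then (n : ℂ) else 0 := by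
  set ω : ℂ := Complex.exp (2 * Real.pi * Complex.I / n) with hω
  have hωm : ω ^ m = Complex.exp (m * (2 * Real.pi * Complex.I / n)) := by
    rw [Complex.exp_int_mul]
  have hdvd : ω ^ m = 1 ↔ (n : ℤ) ∣ m := by
    rw [hωm, Complex.exp_eq_one_iff]
    constructor
    · rintro ⟨l, hl⟩
      refine ⟨l, ?_⟩
      have hn0 : (n : ℂ) ≠ 0 := Nat.cast_ne_zero.2 hn.ne'
      have hπ : (2 * Real.pi * Complex.I : ℂ) ≠ 0 := by
        simp [Real.pi_ne_zero, Complex.I_ne_zero]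
      field_simp at hl
      have h2 : (m : ℂ) * (2 * Real.pi * Complex.I)
          = ((n : ℂ) * l) * (2 * Real.pi * Complex.I) := by rw [hl]
      have : ((m : ℂ)) = ((n : ℂ)) * l := mul_right_cancel₀ hπ h2
      exact_mod_cast this
    · rintro ⟨l, rfl⟩
      refine ⟨l, ?_⟩
      have hn0 : (n : ℂ) ≠ 0 := Nat.cast_ne_zero.2 hn.ne'
      push_cast
      field_simp
  by_cases h : (n : ℤ) ∣ m
  · rw [if_pos h, hdvd.2 h]
    simp
  · rw [if_neg h]
    have hne : ω ^ m ≠ 1 := fun hc => h (hdvd.1 hc)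
    rw [geom_sum_eq hne]
    have : (ω ^ m) ^ n = 1 := by
      rw [← zpow_natCast (ω ^ m), ← zpow_mul, mul_comm, zpow_mul, zpow_natCast,
        show ω ^ n = 1 by
          rw [hω, ← Complex.exp_nat_mul]
          have hn0 : (n : ℂ) ≠ 0 := Nat.cast_ne_zero.2 hn.ne'
          rw [show (n : ℂ) * (2 * Real.pi * Complex.I / n) = 2 * Real.pi * Complex.I by field_simp]
          simpa using Complex.exp_int_mul_two_pi_mul_I 1,
        one_zpow]
    rw [this]
    simp

lemma norm_one_mul_root (u : ℂ) (hu : ‖u‖ = 1) (n : ℕ) (hn : 0 < n) (j : ℕ) :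
    ‖u * Complex.exp (2 * Real.pi * Complex.I / n) ^ j‖ = 1 := by
  rw [norm_mul, hu, one_mul, norm_pow, Complex.norm_exp]
  have : (2 * Real.pi * Complex.I / n).re = 0 := by
    simp [Complex.div_re]
  rw [this, Real.exp_zero, one_pow]

lemma multisection (x : ℝ) (u : ℂ) (hu : ‖u‖ = 1) (n : ℕ) (hn : 0 < n) :
    ∑ j ∈ Finset.range n, Complex.exp (((x : ℂ)/2) *
        (u * Complex.exp (2 * Real.pi * Complex.I / n) ^ j
          - (u * Complex.exp (2 * Real.pi * Complex.I / n) ^ j)⁻¹))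
      = (n : ℂ) * ∑' m : ℤ, cJ ((n : ℤ) * m) x * u ^ ((n : ℤ) * m) := by
  set ω : ℂ := Complex.exp (2 * Real.pi * Complex.I / n) with hω
  have hnorm : ∀ j : ℕ, ‖u * ω ^ j‖ = 1 := fun j => norm_one_mul_root u hu n hn j
  have step1 : ∑ j ∈ Finset.range n, Complex.exp (((x : ℂ)/2) *
      (u * ω ^ j - (u * ω ^ j)⁻¹)) = ∑ j ∈ Finset.range n, ∑' m : ℤ, cJ m x * (u * ω ^ j) ^ m :=
    Finset.sum_congr rfl fun j _ => ((hasSum_cJ x (u * ω ^ j) (hnorm j)).tsum_eq).symm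
  rw [step1, ← Summable.tsum_finsetSum (fun j _ => summable_cJ x (u * ω ^ j) (hnorm j))]
  have step2 : ∀ m : ℤ, ∑ j ∈ Finset.range n, cJ m x * (u * ω ^ j) ^ m
      = if (n : ℤ) ∣ m then (n : ℂ) * (cJ m x * u ^ m) else 0 := by
    intro m
    have hpow : ∀ j : ℕ, (u * ω ^ j) ^ m = u ^ m * (ω ^ m) ^ j := by
      intro j
      rw [mul_zpow]
      congr 1
      rw [← zpow_natCast ω j, ← zpow_mul, mul_comm, zpow_mul, zpow_natCast]
    calc ∑ j ∈ Finset.range n, cJ m x * (u * ω ^ j) ^ m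
        = (cJ m x * u ^ m) * ∑ j ∈ Finset.range n, (ω ^ m) ^ j := by
          rw [Finset.mul_sum]
          exact Finset.sum_congr rfl fun j _ => by rw [hpow]; ring
      _ = _ := by
          rw [geom_sum_root n hn m]
          split_ifs <;> ring
  rw [tsum_congr step2]
  have hinj : Function.Injective (fun m : ℤ => (n : ℤ) * m) :=
    fun a b h => by
      have hn0 : (n : ℤ) ≠ 0 := by exact_mod_cast hn.ne'
      exact mul_left_cancel₀ hn0 h
  rw [← Function.Injective.tsum_eq hinj (f := fun m : ℤ =>
      if (n : ℤ) ∣ m then (n : ℂ) * (cJ m x * u ^ m) else 0) ?_]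
  · rw [← tsum_mul_left]
    refine tsum_congr fun m => ?_
    rw [if_pos ⟨m, rfl⟩]
  · intro m hm
    rw [Function.mem_support] at hm
    by_cases h : (n : ℤ) ∣ m
    · obtain ⟨l, rfl⟩ := h; exact ⟨l, rfl⟩
    · exact absurd (if_neg h) hm

lemma besselJ_nat (m : ℕ) (x : ℝ) : ((besselJ m x : ℝ) : ℂ) = cJ (m : ℤ) x := by
  rw [besselJ, Complex.ofReal_tsum, cJ]
  refine tsum_congr fun j => ?_
  have hΓ : Real.Gamma ((j : ℝ) + (m : ℝ) + 1) = ((j + m).factorial : ℝ) := by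
    rw [show (j : ℝ) + (m : ℝ) + 1 = ((j + m : ℕ) : ℝ) + 1 by push_cast; ring,
      Real.Gamma_nat_eq_factorial]
  have hpow : (x / 2) ^ (2 * (j : ℝ) + (m : ℝ)) = (x / 2) ^ (2 * j + m : ℕ) := by
    rw [show (2 : ℝ) * (j : ℝ) + (m : ℝ) = ((2 * j + m : ℕ) : ℝ) by push_cast; ring,
      Real.rpow_natCast]
  rw [hΓ, hpow]
  have h1 : ((m : ℤ)).natAbs = m := by omega
  have h2 : (-(m : ℤ)).toNat = 0 := by omega
  rw [h1, h2, add_zero]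
  push_cast
  ring

lemma cJ_neg_nat (m : ℕ) (x : ℝ) : cJ (-(m : ℤ)) x = (-1 : ℂ) ^ m * cJ (m : ℤ) x := by
  rw [cJ, cJ, ← tsum_mul_left]
  refine tsum_congr fun j => ?_
  have h1 : (-(m : ℤ)).natAbs = m := by omega
  have h2 : (-(-(m : ℤ))).toNat = m := by omega
  have h3 : ((m : ℤ)).natAbs = m := by omega
  have h4 : (-(m : ℤ)).toNat = 0 := by omega
  rw [h1, h2, h3, h4, add_zero, pow_add]
  ring

lemma pair_term (n m : ℕ) (hn : 0 < n) (x t : ℝ) :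
    cJ ((n * m : ℕ) : ℤ) x * Complex.exp (((t/n - Real.pi/2 : ℝ) : ℂ) * Complex.I) ^ (((n*m : ℕ) : ℤ))
      + cJ (-((n*m : ℕ) : ℤ)) x * Complex.exp (((t/n - Real.pi/2 : ℝ) : ℂ) * Complex.I) ^ (-((n*m : ℕ) : ℤ))
    = 2 * Complex.exp ((-(Real.pi * (n*m : ℕ) / 2) : ℝ) * Complex.I) *
      ((besselJ ((n*m : ℕ) : ℝ) x : ℝ) : ℂ) * ((Real.cos ((m : ℝ) * t)) : ℂ) := by
  set M : ℕ := n * m with hMdef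
  set v : ℂ := Complex.exp (((t/n - Real.pi/2 : ℝ) : ℂ) * Complex.I) with hv
  have hn0 : (n : ℝ) ≠ 0 := Nat.cast_ne_zero.2 hn.ne'
  have hre : (M : ℝ) * (t/n - Real.pi/2) = (m : ℝ) * t + (-(Real.pi * M / 2)) := by
    rw [hMdef]
    push_cast
    field_simp
    ring
  have h1 : v ^ ((M : ℕ) : ℤ) = Complex.exp (((m : ℝ) * t : ℝ) * Complex.I) *
      Complex.exp ((-(Real.pi * M / 2) : ℝ) * Complex.I) := by
    rw [zpow_natCast, hv, ← Complex.exp_nat_mul, ← Complex.exp_add]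
    congr 1
    rw [show ((M : ℂ)) * (((t/n - Real.pi/2 : ℝ) : ℂ) * Complex.I)
        = (((M : ℝ) * (t/n - Real.pi/2) : ℝ) : ℂ) * Complex.I by push_cast; ring, hre]
    push_cast
    ring
  have h2 : ((-1 : ℂ)) ^ M * v ^ (-((M : ℕ) : ℤ)) = Complex.exp ((-((m : ℝ) * t) : ℝ) * Complex.I) *
      Complex.exp ((-(Real.pi * M / 2) : ℝ) * Complex.I) := by
    rw [zpow_neg, zpow_natCast, hv, ← Complex.exp_nat_mul, ← Complex.exp_neg,
      show ((-1 : ℂ)) ^ M = Complex.exp ((M : ℂ) * (Real.pi * Complex.I)) by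
        rw [Complex.exp_nat_mul, Complex.exp_pi_mul_I],
      ← Complex.exp_add, ← Complex.exp_add]
    rw [Complex.exp_eq_exp_iff_exists_int]
    refine ⟨M, ?_⟩
    rw [show ((M : ℂ)) * (((t/n - Real.pi/2 : ℝ) : ℂ) * Complex.I)
        = (((M : ℝ) * (t/n - Real.pi/2) : ℝ) : ℂ) * Complex.I by push_cast; ring, hre]
    push_cast
    ring
  have hcJ1 : cJ ((M : ℕ) : ℤ) x = ((besselJ ((M : ℕ) : ℝ) x : ℝ) : ℂ) := (besselJ_nat M x).symm
  have hcJ2 : cJ (-((M : ℕ) : ℤ)) x = (-1 : ℂ) ^ M * ((besselJ ((M : ℕ) : ℝ) x : ℝ) : ℂ) := by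
    rw [cJ_neg_nat, hcJ1]
  rw [hcJ1, hcJ2, h1]
  rw [show (-1 : ℂ) ^ M * ((besselJ ((M : ℕ) : ℝ) x : ℝ) : ℂ) * v ^ (-((M : ℕ) : ℤ))
      = ((besselJ ((M : ℕ) : ℝ) x : ℝ) : ℂ) * ((-1 : ℂ) ^ M * v ^ (-((M : ℕ) : ℤ))) by ring, h2]
  have hcos : Complex.exp (((m : ℝ) * t : ℝ) * Complex.I) +
      Complex.exp ((-((m : ℝ) * t) : ℝ) * Complex.I) = 2 * ((Real.cos ((m : ℝ) * t)) : ℂ) := by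
    rw [Complex.exp_mul_I, Complex.exp_mul_I]
    push_cast
    simp [Complex.cos_ofReal_re, Real.cos_neg, Real.sin_neg]
    ring
  linear_combination (((besselJ ((M : ℕ) : ℝ) x : ℝ) : ℂ) *
    Complex.exp ((-(Real.pi * M / 2) : ℝ) * Complex.I)) * hcos

lemma kernel_eq_tsum (n : ℕ) (hn : 0 < n) (z w : ℝ) :
    deformedKernel2 (2 / (n : ℝ)) z w
      = ∑' m : ℤ, cJ ((n : ℤ) * m) ((n : ℝ) * z ^ ((1 : ℝ)/(n : ℝ))) *
          Complex.exp (((Real.arccos w / (n : ℝ) - Real.pi/2 : ℝ) : ℂ) * Complex.I) ^ ((n : ℤ) * m) := by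
  have hn0 : (n : ℝ) ≠ 0 := Nat.cast_ne_zero.2 hn.ne'
  set x : ℝ := (n : ℝ) * z ^ ((1 : ℝ)/(n : ℝ)) with hx
  set t : ℝ := Real.arccos w with ht
  set v : ℂ := Complex.exp (((t / (n : ℝ) - Real.pi/2 : ℝ) : ℂ) * Complex.I) with hv
  have hvnorm : ‖v‖ = 1 := by
    rw [hv, Complex.norm_exp_ofReal_mul_I]
  set f : ℤ → ℂ := fun m => cJ m x * v ^ m with hf
  have hfs : Summable f := summable_cJ x v hvnorm
  have hinj : Function.Injective (fun m : ℤ => (n : ℤ) * m) := fun a b h => by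
    have : (n : ℤ) ≠ 0 := by exact_mod_cast hn.ne'
    exact mul_left_cancel₀ this h
  set g : ℤ → ℂ := fun m => f ((n : ℤ) * m) with hg
  have hgs : Summable g := hfs.comp_injective hinj
  have hg1 : Summable (fun p : ℕ => g p) :=
    hgs.comp_injective (fun a b h => by exact_mod_cast h)
  have hg2 : Summable (fun p : ℕ => g (-((p : ℤ) + 1))) :=
    hgs.comp_injective (fun a b h => by omega)
  have hg1' : Summable (fun p : ℕ => g ((p : ℤ) + 1)) := by
    have h := (summable_nat_add_iff (f := fun p : ℕ => g p) 1).2 hg1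
    refine h.congr fun p => ?_
    norm_cast
  show _ = ∑' m : ℤ, g m
  rw [tsum_of_nat_of_neg_add_one hg1 hg2, hg1.tsum_eq_zero_add]
  have hpair : ∀ p : ℕ, g ((p : ℤ) + 1) + g (-((p : ℤ) + 1))
      = 2 * Complex.exp ((-(Real.pi * ((n * (p+1) : ℕ) : ℝ) / 2) : ℝ) * Complex.I) *
        ((besselJ (((n * (p+1) : ℕ)) : ℝ) x : ℝ) : ℂ) *
        ((Real.cos (((p+1 : ℕ) : ℝ) * t)) : ℂ) := by
    intro p
    have e1 : (n : ℤ) * ((p : ℤ) + 1) = ((n * (p+1) : ℕ) : ℤ) := by push_cast; ring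
    have e2 : (n : ℤ) * (-((p : ℤ) + 1)) = -((n * (p+1) : ℕ) : ℤ) := by push_cast; ring
    rw [hg, hf]
    simp only []
    rw [e1, e2]
    exact pair_term n (p+1) hn x t
  have hshift : (∑' p : ℕ, g ((p : ℤ) + 1)) + ∑' p : ℕ, g (-((p : ℤ) + 1))
      = ∑' p : ℕ, (g ((p : ℤ) + 1) + g (-((p : ℤ) + 1))) := (hg1'.tsum_add hg2).symm
  simp only [Nat.cast_zero]
  rw [show (∑' (b : ℕ), g (((b + 1 : ℕ) : ℤ))) = ∑' (b : ℕ), g ((b : ℤ) + 1) from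
    tsum_congr fun b => by norm_cast]
  rw [add_assoc, hshift, tsum_congr hpair]
  have hg0 : g 0 = ((besselJ ((0 : ℕ) : ℝ) x : ℝ) : ℂ) := by
    rw [hg, hf]
    simp only [mul_zero, zpow_zero, mul_one]
    rw [besselJ_nat 0 x]
    norm_num
  rw [hg0]
  rw [show (∑' p : ℕ, 2 * Complex.exp ((-(Real.pi * ((n * (p+1) : ℕ) : ℝ) / 2) : ℝ) * Complex.I) *
        ((besselJ (((n * (p+1) : ℕ)) : ℝ) x : ℝ) : ℂ) * ((Real.cos (((p+1 : ℕ) : ℝ) * t)) : ℂ))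
      = 2 * ∑' p : ℕ, Complex.exp ((-(Real.pi * ((n * (p+1) : ℕ) : ℝ) / 2) : ℝ) * Complex.I) *
        ((besselJ (((n * (p+1) : ℕ)) : ℝ) x : ℝ) : ℂ) * ((Real.cos (((p+1 : ℕ) : ℝ) * t)) : ℂ) by
      rw [← tsum_mul_left]; exact tsum_congr fun p => by ring]
  rw [deformedKernel2]
  have harg : (2 / (2 / (n : ℝ))) * z ^ ((2 / (n : ℝ)) / 2) = x := by
    rw [hx]
    congr 1
    · field_simp
    · congr 1
      field_simp
  congr 1
  · rw [harg]
    norm_num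
  · congr 1
    refine tsum_congr fun p => ?_
    have h1 : 2 * ((p : ℝ) + 1) / (2 / (n : ℝ)) = ((n * (p+1) : ℕ) : ℝ) := by
      push_cast
      field_simp
    have h2 : -(Real.pi * ((p : ℝ) + 1) / (2 / (n : ℝ))) = -(Real.pi * ((n * (p+1) : ℕ) : ℝ) / 2) := by
      push_cast
      field_simp
    have h3 : ((p : ℝ) + 1) * Real.arccos w = ((p+1 : ℕ) : ℝ) * t := by
      rw [ht]; push_cast; ring
    rw [harg, h1, h3]
    congr 2
    rw [← h2]
    push_cast
    ring

lemma tsumRootSum (n : ℕ) (hn : 0 < n) (x t : ℝ) :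
    (∑' m : ℤ, cJ ((n : ℤ) * m) x *
        Complex.exp (((t/(n : ℝ) - Real.pi/2 : ℝ) : ℂ) * Complex.I) ^ ((n : ℤ) * m))
      = (1 / (n : ℂ)) * ∑ j ∈ Finset.range n,
          Complex.exp (((-(x * Real.cos (t/(n : ℝ) + 2*Real.pi*(j : ℝ)/(n : ℝ))) : ℝ) : ℂ) * Complex.I) := by
  have hn0 : (n : ℂ) ≠ 0 := Nat.cast_ne_zero.2 hn.ne'
  set v : ℂ := Complex.exp (((t/(n : ℝ) - Real.pi/2 : ℝ) : ℂ) * Complex.I) with hv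
  have hvnorm : ‖v‖ = 1 := by rw [hv, Complex.norm_exp_ofReal_mul_I]
  have hms := multisection x v hvnorm n hn
  set ω : ℂ := Complex.exp (2 * Real.pi * Complex.I / n) with hω
  have hsin : ∀ c : ℝ, Real.sin (c - Real.pi/2) = -Real.cos c := fun c => by
    rw [Real.sin_sub, Real.sin_pi_div_two, Real.cos_pi_div_two]; ring
  have hdiff : ∀ ψ : ℝ, Complex.exp ((ψ : ℂ) * Complex.I) -
      (Complex.exp ((ψ : ℂ) * Complex.I))⁻¹ = 2 * ((Real.sin ψ : ℝ) : ℂ) * Complex.I := by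
    intro ψ
    rw [← Complex.exp_neg, show -((ψ : ℂ) * Complex.I) = ((-ψ : ℝ) : ℂ) * Complex.I by
      push_cast; ring, Complex.exp_mul_I, Complex.exp_mul_I]
    push_cast
    rw [Complex.cos_neg, Complex.sin_neg, ← Complex.ofReal_sin]
    push_cast
    ring
  have hterm : ∀ j : ℕ, Complex.exp (((x : ℂ)/2) * (v * ω ^ j - (v * ω ^ j)⁻¹))
      = Complex.exp (((-(x * Real.cos (t/(n : ℝ) + 2*Real.pi*(j : ℝ)/(n : ℝ))) : ℝ) : ℂ) * Complex.I) := by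
    intro j
    have huj : v * ω ^ j
        = Complex.exp ((((t/(n : ℝ) + 2*Real.pi*(j : ℝ)/(n : ℝ)) - Real.pi/2 : ℝ) : ℂ) * Complex.I) := by
      rw [hv, hω, ← Complex.exp_nat_mul, ← Complex.exp_add]
      congr 1
      have : ((n : ℂ)) ≠ 0 := hn0
      field_simp
      push_cast
      field_simp
      ring
    rw [huj, hdiff]
    congr 1
    rw [hsin]
    push_cast
    ring
  rw [Finset.sum_congr rfl (fun j _ => (hterm j).symm), hms]
  rw [← mul_assoc, one_div, inv_mul_cancel₀ hn0, one_mul]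

theorem kernel_dim_two_odd_caseAUX (k : ℕ) (hk : 1 ≤ k) (z : ℝ) (hz : 0 < z)
    (w : ℝ) (hw : w ∈ Set.Icc (-1 : ℝ) 1) :
    deformedKernel2 (2 / (2 * (k : ℝ) + 1)) z w =
      (1 / (2 * (k : ℂ) + 1)) *
        ((Real.cos ((2 * (k : ℝ) + 1) * z ^ ((1 : ℝ) / (2 * (k : ℝ) + 1)) *
            Real.cos (Real.arccos w / (2 * (k : ℝ) + 1))) : ℝ) : ℂ) +
      (2 / (2 * (k : ℂ) + 1)) * ∑ l ∈ Finset.Icc 1 k,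
        ((Real.cos ((2 * (k : ℝ) + 1) * z ^ ((1 : ℝ) / (2 * (k : ℝ) + 1)) *
            Real.cos (Real.arccos w / (2 * (k : ℝ) + 1)) *
            Real.cos (2 * Real.pi * (l : ℝ) / (2 * (k : ℝ) + 1))) : ℝ) : ℂ) *
        ((Real.cos ((2 * (k : ℝ) + 1) * z ^ ((1 : ℝ) / (2 * (k : ℝ) + 1)) *
            Real.sin (Real.arccos w / (2 * (k : ℝ) + 1)) *
            Real.sin (2 * Real.pi * (l : ℝ) / (2 * (k : ℝ) + 1))) : ℝ) : ℂ) -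
      (Complex.I / (2 * (k : ℂ) + 1)) *
        ((Real.sin ((2 * (k : ℝ) + 1) * z ^ ((1 : ℝ) / (2 * (k : ℝ) + 1)) *
            Real.cos (Real.arccos w / (2 * (k : ℝ) + 1)))) : ℂ) -
      (2 * Complex.I / (2 * (k : ℂ) + 1)) * ∑ l ∈ Finset.Icc 1 k,
        ((Real.sin ((2 * (k : ℝ) + 1) * z ^ ((1 : ℝ) / (2 * (k : ℝ) + 1)) *
            Real.cos (Real.arccos w / (2 * (k : ℝ) + 1)) *
            Real.cos (2 * Real.pi * (l : ℝ) / (2 * (k : ℝ) + 1))) : ℝ) : ℂ) *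
        ((Real.cos ((2 * (k : ℝ) + 1) * z ^ ((1 : ℝ) / (2 * (k : ℝ) + 1)) *
            Real.sin (Real.arccos w / (2 * (k : ℝ) + 1)) *
            Real.sin (2 * Real.pi * (l : ℝ) / (2 * (k : ℝ) + 1))) : ℝ) : ℂ) := by
  set n : ℕ := 2 * k + 1 with hndef
  have hn : 0 < n := by omega
  have hNn : ((n : ℕ) : ℝ) = 2 * (k : ℝ) + 1 := by rw [hndef]; push_cast; ring
  set N : ℝ := 2 * (k : ℝ) + 1 with hN
  have hN0 : N ≠ 0 := by positivity
  set t : ℝ := Real.arccos w with ht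
  set x : ℝ := N * z ^ ((1 : ℝ) / N) with hx
  have hx' : (n : ℝ) * z ^ ((1 : ℝ)/(n : ℝ)) = x := by rw [hNn, hx]
  set A : ℝ := t / N with hA
  -- step 1 : kernel as finite sum
  have hstart : deformedKernel2 (2 / N) z w
      = (1 / (n : ℂ)) * ∑ j ∈ Finset.range n,
          Complex.exp (((-(x * Real.cos (A + 2*Real.pi*(j : ℝ)/N)) : ℝ) : ℂ) * Complex.I) := by
    rw [show (2 : ℝ) / N = 2 / ((n : ℕ) : ℝ) by rw [hNn]]
    rw [kernel_eq_tsum n hn z w]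
    rw [show (Real.arccos w / (n : ℝ) - Real.pi/2 : ℝ) = (t/(n : ℝ) - Real.pi/2 : ℝ) by rw [ht]]
    rw [tsumRootSum n hn ((n : ℝ) * z ^ ((1 : ℝ)/(n : ℝ))) t]
    congr 1
    refine Finset.sum_congr rfl fun j _ => ?_
    congr 3
    rw [hx', hA, hNn]
  set F : ℕ → ℂ := fun j =>
    Complex.exp (((-(x * Real.cos (A + 2*Real.pi*(j : ℝ)/N)) : ℝ) : ℂ) * Complex.I) with hF
  -- split the sum
  have hsplit : ∑ j ∈ Finset.range n, F j
      = F 0 + ∑ l ∈ Finset.Icc 1 k, (F l + F (n - l)) := by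
    have e1 : ∑ j ∈ Finset.range n, F j
        = ∑ j ∈ Finset.Ico 0 (k+1), F j + ∑ j ∈ Finset.Ico (k+1) n, F j := by
      rw [Finset.range_eq_Ico, ← Finset.sum_Ico_consecutive _ (Nat.zero_le (k+1)) (by omega : k+1 ≤ n)]
    have e2 : ∑ j ∈ Finset.Ico 0 (k+1), F j = F 0 + ∑ l ∈ Finset.Icc 1 k, F l := by
      rw [Finset.sum_eq_sum_Ico_succ_bot (by omega : 0 < k+1), Finset.Ico_add_one_right_eq_Icc]
    have e3 : ∑ j ∈ Finset.Ico (k+1) n, F j = ∑ l ∈ Finset.Icc 1 k, F (n - l) := by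
      refine Finset.sum_nbij' (fun j => n - j) (fun l => n - l) ?_ ?_ ?_ ?_ ?_
      · intro a ha
        simp only [Finset.mem_Ico] at ha
        simp only [Finset.mem_Icc]
        omega
      · intro a ha
        simp only [Finset.mem_Icc] at ha
        simp only [Finset.mem_Ico]
        omega
      · intro a ha
        simp only [Finset.mem_Ico] at ha
        show n - (n - a) = a
        omega
      · intro a ha
        simp only [Finset.mem_Icc] at ha
        show n - (n - a) = a
        omega
      · intro a ha
        simp only [Finset.mem_Ico] at ha
        show F a = F (n - (n - a))
        congr 1
        omega
    rw [e1, e2, e3, add_assoc, ← Finset.sum_add_distrib]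
  have hF0 : F 0 = ((Real.cos (x * Real.cos A) : ℝ) : ℂ)
      - Complex.I * ((Real.sin (x * Real.cos A) : ℝ) : ℂ) := by
    rw [hF]
    simp only []
    rw [show A + 2*Real.pi*((0 : ℕ) : ℝ)/N = A by push_cast; ring]
    rw [Complex.exp_mul_I]
    simp only [Complex.ofReal_neg, Complex.cos_neg, Complex.sin_neg,
      Complex.ofReal_cos, Complex.ofReal_sin]
    ring
  have hFl : ∀ l ∈ Finset.Icc 1 k, F l + F (n - l)
      = 2 * (((Real.cos (x * Real.cos A * Real.cos (2*Real.pi*(l : ℝ)/N)) : ℝ) : ℂ)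
          - Complex.I * ((Real.sin (x * Real.cos A * Real.cos (2*Real.pi*(l : ℝ)/N)) : ℝ) : ℂ))
        * ((Real.cos (x * Real.sin A * Real.sin (2*Real.pi*(l : ℝ)/N)) : ℝ) : ℂ) := by
    intro l hl
    rw [Finset.mem_Icc] at hl
    set θ : ℝ := 2*Real.pi*(l : ℝ)/N with hθ
    set P : ℝ := x * Real.cos A * Real.cos θ with hP
    set Q : ℝ := x * Real.sin A * Real.sin θ with hQ
    have hcast : ((n - l : ℕ) : ℝ) = N - l := by
      rw [Nat.cast_sub (by omega : l ≤ n), hNn, hN]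
    have h1 : x * Real.cos (A + 2*Real.pi*(l : ℝ)/N) = P - Q := by
      rw [Real.cos_add, hP, hQ, hθ]; ring
    have harg : A + 2*Real.pi*((n - l : ℕ) : ℝ)/N = (A - θ) + 2*Real.pi := by
      rw [hcast, hθ]
      field_simp
      ring
    have h2 : x * Real.cos (A + 2*Real.pi*((n - l : ℕ) : ℝ)/N) = P + Q := by
      rw [harg, Real.cos_add_two_pi, Real.cos_sub, hP, hQ]; ring
    rw [hF]
    simp only []
    rw [h1, h2]
    rw [show ((-(P - Q) : ℝ) : ℂ) * Complex.I
        = ((-P : ℝ) : ℂ) * Complex.I + ((Q : ℝ) : ℂ) * Complex.I by push_cast; ring,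
      show ((-(P + Q) : ℝ) : ℂ) * Complex.I
        = ((-P : ℝ) : ℂ) * Complex.I + ((-Q : ℝ) : ℂ) * Complex.I by push_cast; ring,
      Complex.exp_add, Complex.exp_add]
    simp only [Complex.exp_mul_I, Complex.ofReal_neg, Complex.cos_neg, Complex.sin_neg,
      Complex.ofReal_cos, Complex.ofReal_sin]
    ring
  rw [hstart, hsplit, hF0, Finset.sum_congr rfl hFl]
  have hsum2 : ∑ l ∈ Finset.Icc 1 k,
      (2 * (((Real.cos (x * Real.cos A * Real.cos (2*Real.pi*(l : ℝ)/N)) : ℝ) : ℂ)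
          - Complex.I * ((Real.sin (x * Real.cos A * Real.cos (2*Real.pi*(l : ℝ)/N)) : ℝ) : ℂ))
        * ((Real.cos (x * Real.sin A * Real.sin (2*Real.pi*(l : ℝ)/N)) : ℝ) : ℂ))
      = 2 * (∑ l ∈ Finset.Icc 1 k,
          ((Real.cos (x * Real.cos A * Real.cos (2*Real.pi*(l : ℝ)/N)) : ℝ) : ℂ)
          * ((Real.cos (x * Real.sin A * Real.sin (2*Real.pi*(l : ℝ)/N)) : ℝ) : ℂ))
        - 2 * Complex.I * (∑ l ∈ Finset.Icc 1 k,
          ((Real.sin (x * Real.cos A * Real.cos (2*Real.pi*(l : ℝ)/N)) : ℝ) : ℂ)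
          * ((Real.cos (x * Real.sin A * Real.sin (2*Real.pi*(l : ℝ)/N)) : ℝ) : ℂ)) := by
    rw [Finset.mul_sum, Finset.mul_sum, ← Finset.sum_sub_distrib]
    exact Finset.sum_congr rfl fun l _ => by ring
  rw [hsum2]
  have hNC : ((n : ℕ) : ℂ) = 2 * (k : ℂ) + 1 := by rw [hndef]; push_cast; ring
  rw [hNC]
  have harg2 : ∀ l : ℕ, 2*Real.pi*(l : ℝ)/N = 2 * Real.pi * (l : ℝ) / (2 * (k : ℝ) + 1) := by
    intro l; rw [hN]
  ring

/-- Closed formula for the two-dimensional kernel when `a = 2/(2k+1)` (i.e. `n = 2k+1` odd). -/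
theorem kernel_dim_two_odd_case (k : ℕ) (hk : 1 ≤ k) (z : ℝ) (hz : 0 < z)
    (w : ℝ) (hw : w ∈ Set.Icc (-1 : ℝ) 1) :
    deformedKernel2 (2 / (2 * (k : ℝ) + 1)) z w =
      (1 / (2 * (k : ℂ) + 1)) *
        ((Real.cos ((2 * (k : ℝ) + 1) * z ^ ((1 : ℝ) / (2 * (k : ℝ) + 1)) *
            Real.cos (Real.arccos w / (2 * (k : ℝ) + 1))) : ℝ) : ℂ) +
      (2 / (2 * (k : ℂ) + 1)) * ∑ l ∈ Finset.Icc 1 k,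
        ((Real.cos ((2 * (k : ℝ) + 1) * z ^ ((1 : ℝ) / (2 * (k : ℝ) + 1)) *
            Real.cos (Real.arccos w / (2 * (k : ℝ) + 1)) *
            Real.cos (2 * Real.pi * (l : ℝ) / (2 * (k : ℝ) + 1))) : ℝ) : ℂ) *
        ((Real.cos ((2 * (k : ℝ) + 1) * z ^ ((1 : ℝ) / (2 * (k : ℝ) + 1)) *
            Real.sin (Real.arccos w / (2 * (k : ℝ) + 1)) *
            Real.sin (2 * Real.pi * (l : ℝ) / (2 * (k : ℝ) + 1))) : ℝ) : ℂ) -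
      (Complex.I / (2 * (k : ℂ) + 1)) *
        ((Real.sin ((2 * (k : ℝ) + 1) * z ^ ((1 : ℝ) / (2 * (k : ℝ) + 1)) *
            Real.cos (Real.arccos w / (2 * (k : ℝ) + 1))) : ℝ) : ℂ) -
      (2 * Complex.I / (2 * (k : ℂ) + 1)) * ∑ l ∈ Finset.Icc 1 k,
        ((Real.sin ((2 * (k : ℝ) + 1) * z ^ ((1 : ℝ) / (2 * (k : ℝ) + 1)) *
            Real.cos (Real.arccos w / (2 * (k : ℝ) + 1)) *
            Real.cos (2 * Real.pi * (l : ℝ) / (2 * (k : ℝ) + 1))) : ℝ) : ℂ) *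
        ((Real.cos ((2 * (k : ℝ) + 1) * z ^ ((1 : ℝ) / (2 * (k : ℝ) + 1)) *
            Real.sin (Real.arccos w / (2 * (k : ℝ) + 1)) *
            Real.sin (2 * Real.pi * (l : ℝ) / (2 * (k : ℝ) + 1))) : ℝ) : ℂ) :=
  kernel_dim_two_odd_caseAUX k hk z hz w hw
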